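/- Let V be a finite type, w : V → V → ℕ∞, d : ℕ, and let w^{≤d} be the capped graph on V. Then for all u ≠ v, dist_{w^{≤d}}(u,v) = min(dist_w(u,v), d). -/

import Mathlib

/-- Weight of a walk starting at `u` and visiting the vertices of `p` in order. -/
def walkWeight {V : Type*} (w : V → V → ℕ∞) : V → List V → ℕ∞
  | _, [] => 0
  | u, x :: xs => w u x + walkWeight w x xs

/-- Shortest-path distance: infimum of weights of walks from `u` to `v`. -/
noncomputable def gdist {V : Type*} (w : V → V → ℕ∞) (u v : V) : ℕ∞ :=
  ⨅ (p : List V) (_ : (u :: p).getLast (List.cons_ne_nil u p) = v), walkWeight w u p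

/-- Eccentricity of a vertex. -/
noncomputable def ecc {V : Type*} (w : V → V → ℕ∞) (v : V) : ℕ∞ :=
  ⨆ u, gdist w v u

/-- Radius. -/
noncomputable def rad {V : Type*} (w : V → V → ℕ∞) : ℕ∞ :=
  ⨅ v, ecc w v

/-- Diameter. -/
noncomputable def diam {V : Type*} (w : V → V → ℕ∞) : ℕ∞ :=
  ⨆ v, ecc w v

/-- Capped graph: add an edge of weight `d` between every ordered pair of distinct vertices. -/
noncomputable def capped {V : Type*} [DecidableEq V] (w : V → V → ℕ∞) (d : ℕ) : V → V → ℕ∞ :=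
  fun u v => if u = v then w u v else min (w u v) (d : ℕ∞)

lemma walkWeight_capped_le {V : Type*} [DecidableEq V] (w : V → V → ℕ∞) (d : ℕ) :
    ∀ (u : V) (p : List V), walkWeight (capped w d) u p ≤ walkWeight w u p := by
  intro u p
  induction p generalizing u with
  | nil => simp [walkWeight]
  | cons x xs ih =>
    simp only [walkWeight]
    refine add_le_add ?_ (ih x)
    unfold capped
    split <;> simp

lemma min_le_walkWeight_capped {V : Type*} [DecidableEq V] (w : V → V → ℕ∞) (d : ℕ) :
    ∀ (u : V) (p : List V),
      min (walkWeight w u p) (d : ℕ∞) ≤ walkWeight (capped w d) u p := by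
  intro u p
  induction p generalizing u with
  | nil => simp [walkWeight]
  | cons x xs ih =>
    simp only [walkWeight]
    have h1 : min (w u x) (d : ℕ∞) ≤ capped w d u x := by
      unfold capped; split <;> simp
    have h2 := ih x
    calc min (w u x + walkWeight w x xs) (d : ℕ∞)
        ≤ min (w u x) (d : ℕ∞) + min (walkWeight w x xs) (d : ℕ∞) := by
          rcases le_total (w u x) (d : ℕ∞) with h | h
          · rcases le_total (walkWeight w x xs) (d : ℕ∞) with h' | h'
            · simp [min_eq_left h, min_eq_left h']
            · exact (min_le_right _ _).trans
                (by rw [min_eq_right h']; exact le_add_self)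
          · exact (min_le_right _ _).trans
              (by rw [min_eq_right h]; exact self_le_add_right _ _)
      _ ≤ capped w d u x + walkWeight (capped w d) x xs := add_le_add h1 h2

theorem stmt9 {V : Type*} [Fintype V] [DecidableEq V] (w : V → V → ℕ∞) (d : ℕ) :
    ∀ u v : V, u ≠ v → gdist (capped w d) u v = min (gdist w u v) (d : ℕ∞) := by
  intro u v huv
  apply le_antisymm
  · apply le_min
    · exact iInf₂_mono fun p hp => walkWeight_capped_le w d u p
    · have : gdist (capped w d) u v ≤ walkWeight (capped w d) u [v] := by
        apply iInf₂_le ([v] : List V)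
        simp
      refine this.trans ?_
      simp [walkWeight, capped, huv]
  · refine le_iInf₂ fun p hp => ?_
    calc min (gdist w u v) (d : ℕ∞)
        ≤ min (walkWeight w u p) (d : ℕ∞) :=
          min_le_min (iInf₂_le p hp) le_rfl
      _ ≤ walkWeight (capped w d) u p := min_le_walkWeight_capped w d u p
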